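/- Let K/F be a cyclic cubic extension of number fields. (i) If F contains no primitive cube root of unity, then F* ∩ (K*)³ = (F*)³, i.e. the natural homomorphism F*/(F*)³ → K*/(K*)³ induced by the inclusion F ⊆ K is injective. (ii) If F contains a primitive cube root of unity, then there exists D ∈ F* \ (F*)³ with K = F(∛D), and the kernel (F* ∩ (K*)³)/(F*)³ of this homomorphism is cyclic of order 3, generated by the class of D. -/

import Mathlib

open Module Polynomial

section Aux
variable {F K : Type*} [Field F] [Field K] [Algebra F K]

lemma aux_prim {ζ : F} (h3 : ζ ^ 3 = 1) (h1 : ζ ≠ 1) : IsPrimitiveRoot ζ 3 := by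
  have ho : orderOf ζ ∣ 3 := orderOf_dvd_of_pow_eq_one h3
  have : orderOf ζ = 3 := by
    rcases (Nat.prime_three).eq_one_or_self_of_dvd _ ho with h | h
    · exact absurd (orderOf_eq_one_iff.mp h) h1
    · exact h
  exact this ▸ IsPrimitiveRoot.orderOf ζ

lemma aux_fixed [FiniteDimensional F K] [IsGalois F K] {u : K}
    (h : ∀ σ : K ≃ₐ[F] K, σ u = u) : ∃ z : F, algebraMap F K z = u := by
  have hm : u ∈ IntermediateField.fixedField
      (IntermediateField.fixingSubgroup (⊥ : IntermediateField F K)) := fun σ => h σ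
  rw [IsGalois.fixedField_fixingSubgroup] at hm
  exact IntermediateField.mem_bot.mp hm

lemma aux_gen [FiniteDimensional F K] {σ : K ≃ₐ[F] K} (hσ : ∀ τ, τ ∈ Subgroup.zpowers σ)
    {u : K} (h : σ u = u) (τ : K ≃ₐ[F] K) : τ u = u := by
  obtain ⟨n, rfl⟩ := (isOfFinOrder_of_finite σ).mem_powers_iff_mem_zpowers.mpr (hσ τ)
  induction n with
  | zero => show (σ ^ 0) u = u; simp
  | succ n ih =>
    show (σ ^ (n + 1)) u = u
    rw [pow_succ, AlgEquiv.mul_apply, h]; exact ih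

lemma aux_omega [FiniteDimensional F K] (hdeg : Module.finrank F K = 3)
    {ω : K} (h3 : ω ^ 3 = 1) (h1 : ω ≠ 1) : ∃ ζ : F, IsPrimitiveRoot ζ 3 := by
  have hroot : ω ^ 2 + ω + 1 = 0 := by
    have hfac : (ω - 1) * (ω ^ 2 + ω + 1) = 0 := by linear_combination h3
    rcases mul_eq_zero.mp hfac with h | h
    · exact absurd (sub_eq_zero.mp h) h1
    · exact h
  have hint : IsIntegral F ω := Algebra.IsIntegral.isIntegral ω
  have hdvd : minpoly F ω ∣ (X ^ 2 + X + 1 : F[X]) := minpoly.dvd F ω (by simpa using hroot)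
  have hdeg2 : (X ^ 2 + X + 1 : F[X]).natDegree = 2 := by compute_degree!
  have hne : (X ^ 2 + X + 1 : F[X]) ≠ 0 := fun h => by simp [h] at hdeg2
  have hle : (minpoly F ω).natDegree ≤ 2 := hdeg2 ▸ Polynomial.natDegree_le_of_dvd hdvd hne
  have hd : (minpoly F ω).natDegree ∣ 3 := hdeg ▸ minpoly.degree_dvd hint
  have h1' : (minpoly F ω).natDegree = 1 := by
    rcases (Nat.prime_three).eq_one_or_self_of_dvd _ hd with h | h <;> omega
  obtain ⟨ζ, hζ⟩ := minpoly.natDegree_eq_one_iff.mp h1'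
  refine ⟨ζ, aux_prim ?_ ?_⟩
  · exact (algebraMap F K).injective (by rw [map_pow, hζ, h3, map_one])
  · intro h; exact h1 (by rw [← hζ, h, map_one])

lemma aux_absorb (D x z : F) (c : ℕ) (h : x = z ^ 3 * D ^ c) :
    ∃ w : F, x = w ^ 3 ∨ x = D * w ^ 3 ∨ x = D ^ 2 * w ^ 3 := by
  obtain ⟨q, r, hr, rfl⟩ : ∃ q r, r < 3 ∧ c = 3 * q + r :=
    ⟨c / 3, c % 3, Nat.mod_lt _ (by norm_num), by omega⟩
  refine ⟨z * D ^ q, ?_⟩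
  subst h
  interval_cases r
  · left; ring
  · right; left; ring
  · right; right; ring

end Aux

/-- Let `K/F` be a cyclic cubic extension of number fields.
(i) If `F` contains no primitive cube root of unity, then every element of `F` that becomes
a cube in `K` is already a cube in `F` (so `F*/(F*)³ → K*/(K*)³` is injective).
(ii) If `F` contains a primitive cube root of unity, then there is `D ∈ F* \ (F*)³` with
`K = F(∛D)`, and the kernel of `F*/(F*)³ → K*/(K*)³` is cyclic of order `3` generated by
the class of `D`: a nonzero `x ∈ F` is a cube in `K` iff `x ∈ {z³, D·z³, D²·z³ : z ∈ F}`. -/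
theorem stmt_6 (F K : Type*) [Field F] [NumberField F] [Field K] [NumberField K]
    [Algebra F K] [IsGalois F K] (hdeg : Module.finrank F K = 3) :
    ((¬ ∃ ζ : F, IsPrimitiveRoot ζ 3) →
      ∀ x : F, (∃ y : K, algebraMap F K x = y ^ 3) → ∃ z : F, x = z ^ 3) ∧
    ((∃ ζ : F, IsPrimitiveRoot ζ 3) →
      ∃ D : F, D ≠ 0 ∧ (¬ ∃ z : F, D = z ^ 3) ∧
        (∃ d : K, d ^ 3 = algebraMap F K D ∧ IntermediateField.adjoin F {d} = ⊤) ∧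
        ∀ x : F, x ≠ 0 →
          ((∃ y : K, algebraMap F K x = y ^ 3) ↔
            ∃ z : F, x = z ^ 3 ∨ x = D * z ^ 3 ∨ x = D ^ 2 * z ^ 3)) := by
  have hfd : FiniteDimensional F K := Module.finite_of_finrank_pos (by rw [hdeg]; norm_num)
  have hinj := (algebraMap F K).injective
  constructor
  · rintro hno x ⟨y, hy⟩
    by_cases hx : x = 0
    · exact ⟨0, by rw [hx]; ring⟩
    have hy0 : y ≠ 0 := by
      intro h; exact hx (hinj (by rw [hy, h, map_zero]; ring))
    have hfix : ∀ σ : K ≃ₐ[F] K, σ y = y := by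
      intro σ
      by_contra hne
      have hcube : (σ y) ^ 3 = y ^ 3 := by
        calc (σ y) ^ 3 = σ (y ^ 3) := (map_pow σ y 3).symm
        _ = σ (algebraMap F K x) := by rw [← hy]
        _ = algebraMap F K x := σ.commutes x
        _ = y ^ 3 := hy
      have h3 : (σ y / y) ^ 3 = 1 := by
        rw [div_pow, hcube, div_self (pow_ne_zero _ hy0)]
      have h1 : σ y / y ≠ 1 := fun h => hne (by field_simp at h; exact h)
      exact hno (aux_omega hdeg h3 h1)
    obtain ⟨z, hz⟩ := aux_fixed hfix
    exact ⟨z, hinj (by rw [hy, map_pow, hz])⟩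
  · rintro ⟨ζ, hζ⟩
    have hcard : Nat.card (K ≃ₐ[F] K) = 3 := by
      rw [IsGalois.card_aut_eq_finrank, hdeg]
    have : Fact (Nat.Prime 3) := ⟨Nat.prime_three⟩
    have hcyc : IsCyclic (K ≃ₐ[F] K) := isCyclic_of_prime_card hcard
    have hKne : (primitiveRoots (finrank F K) F).Nonempty := by
      rw [hdeg]; exact ⟨ζ, (mem_primitiveRoots (by norm_num)).mpr hζ⟩
    obtain ⟨α, hmem, htop⟩ := exists_root_adjoin_eq_top_of_isCyclic F K hKne
    rw [hdeg] at hmem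
    obtain ⟨D, hD⟩ := hmem
    set ω := algebraMap F K ζ with hωdef
    have hω : IsPrimitiveRoot ω 3 := hζ.map_of_injective hinj
    have hω0 : ω ≠ 0 := hω.ne_zero (by norm_num)
    have hαF : α ∉ Set.range (algebraMap F K) := by
      intro hα
      have hbot : IntermediateField.adjoin F {α} = ⊥ :=
        IntermediateField.adjoin_simple_eq_bot_iff.mpr (IntermediateField.mem_bot.mpr hα)
      have e : (⊥ : IntermediateField F K) = ⊤ := hbot ▸ htop
      have h1 : finrank F (⊥ : IntermediateField F K) = 1 := IntermediateField.finrank_bot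
      rw [e, IntermediateField.finrank_top', hdeg] at h1
      exact absurd h1 (by norm_num)
    have hD0 : D ≠ 0 := by
      rintro rfl
      rw [map_zero] at hD
      have : α = 0 := pow_eq_zero_iff (by norm_num) |>.mp hD.symm
      exact hαF ⟨0, by rw [map_zero, this]⟩
    have hα0 : α ≠ 0 := by
      rintro rfl
      exact hD0 (hinj (by rw [hD, map_zero]; ring))
    refine ⟨D, hD0, ?_, ⟨α, hD.symm, htop⟩, ?_⟩
    · rintro ⟨z, rfl⟩
      have hz0 : z ≠ 0 := fun h => hD0 (by rw [h]; ring)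
      have hz0' : algebraMap F K z ≠ 0 := fun h => hz0 (hinj (by rw [h, map_zero]))
      have h3 : (α / algebraMap F K z) ^ 3 = 1 := by
        rw [div_pow, ← hD, map_pow, div_self (pow_ne_zero _ hz0')]
      obtain ⟨i, _, hi⟩ := hω.eq_pow_of_pow_eq_one h3
      refine hαF ⟨ζ ^ i * z, ?_⟩
      rw [map_mul, map_pow, ← hωdef, hi, div_mul_cancel₀ _ hz0']
    · obtain ⟨σ, hσ⟩ := hcyc.exists_generator
      have hσα : σ α ≠ α := by
        intro h
        exact hαF (let ⟨z, hz⟩ := aux_fixed (aux_gen hσ h); ⟨z, hz⟩)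
      have hcubeα : (σ α) ^ 3 = α ^ 3 := by
        calc (σ α) ^ 3 = σ (α ^ 3) := (map_pow σ α 3).symm
        _ = σ (algebraMap F K D) := by rw [hD]
        _ = algebraMap F K D := σ.commutes D
        _ = α ^ 3 := hD
      obtain ⟨b, hb3, hbα⟩ := hω.eq_pow_of_pow_eq_one
        (by rw [div_pow, hcubeα, div_self (pow_ne_zero _ hα0)] :
          (σ α / α) ^ 3 = 1)
      have hσαeq : σ α = ω ^ b * α := by rw [hbα, div_mul_cancel₀ _ hα0]
      have hb0 : b ≠ 0 := by
        rintro rfl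
        exact hσα (by rw [hσαeq, pow_zero, one_mul])
      intro x hx
      constructor
      · rintro ⟨y, hy⟩
        have hy0 : y ≠ 0 := by
          intro h; exact hx (hinj (by rw [hy, h, map_zero]; ring))
        have hcubey : (σ y) ^ 3 = y ^ 3 := by
          calc (σ y) ^ 3 = σ (y ^ 3) := (map_pow σ y 3).symm
          _ = σ (algebraMap F K x) := by rw [← hy]
          _ = algebraMap F K x := σ.commutes x
          _ = y ^ 3 := hy
        obtain ⟨a, ha3, hay⟩ := hω.eq_pow_of_pow_eq_one
          (by rw [div_pow, hcubey, div_self (pow_ne_zero _ hy0)] :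
            (σ y / y) ^ 3 = 1)
        have hσyeq : σ y = ω ^ a * y := by rw [hay, div_mul_cancel₀ _ hy0]
        obtain ⟨c, hc⟩ : ∃ c : ℕ, (ω ^ b) ^ c = ω ^ a := by
          interval_cases b
          · exact absurd rfl hb0
          · exact ⟨a, by rw [pow_one]⟩
          · refine ⟨2 * a, ?_⟩
            rw [← pow_mul]
            have h4 : 2 * (2 * a) = 3 * a + a := by ring
            rw [h4, pow_add, pow_mul, hω.pow_eq_one, one_pow, one_mul]
        set u := y / α ^ c with hu
        have hσu : σ u = u := by
          rw [hu, map_div₀, map_pow, hσyeq, hσαeq, mul_pow, hc, mul_div_mul_left _ _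
            (pow_ne_zero _ hω0)]
        obtain ⟨z, hz⟩ := aux_fixed (aux_gen hσ hσu)
        have hyeq : y = u * α ^ c := by
          rw [hu, div_mul_cancel₀ _ (pow_ne_zero _ hα0)]
        have hxz : algebraMap F K x = algebraMap F K (z ^ 3 * D ^ c) := by
          rw [map_mul, map_pow, map_pow, hz, hD, hy, hyeq]
          rw [mul_pow, ← pow_mul, ← pow_mul, mul_comm 3 c, pow_mul]
        exact aux_absorb D x _ c (hinj hxz)
      · rintro ⟨z, h | h | h⟩
        · exact ⟨algebraMap F K z, by rw [h, map_pow]⟩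
        · refine ⟨α * algebraMap F K z, ?_⟩
          rw [h, map_mul, map_pow, mul_pow, hD]
        · refine ⟨α ^ 2 * algebraMap F K z, ?_⟩
          rw [h, map_mul, map_pow, map_pow, mul_pow, ← pow_mul, mul_comm 2 3, pow_mul, hD]
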